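/- Let P and Q be polynomials in the jet variables (f_k^{(λ)})_{1≤k≤n, λ≥1} that are invariant by reparametrization of weights m and n respectively, i.e. P(jᵏ(f∘φ)) = (φ')^m · P((jᵏf)∘φ) and similarly for Q. Define the total differentiation operator D = Σ_k Σ_λ f_k^{(λ+1)} ∂/∂f_k^{(λ)} and the bracket [P,Q] := n·(DP)·Q − m·P·(DQ). Then [P,Q] is invariant by reparametrization of weight m + n + 1. -/

import Mathlib

open MvPolynomial

/-- The total differentiation operator `D = Σ_k Σ_λ f_k^{(λ+1)} ∂/∂f_k^{(λ)}` acting on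
jet polynomials, i.e. polynomials in the formal derivative variables `f_k^{(λ)}`,
encoded as `MvPolynomial (Fin n × ℕ) ℂ` where the variable `(k, λ)` stands for
`f_k^{(λ)}`. -/
noncomputable def Dop {n : ℕ} (P : MvPolynomial (Fin n × ℕ) ℂ) :
    MvPolynomial (Fin n × ℕ) ℂ :=
  ∑ v ∈ P.vars, X (v.1, v.2 + 1) * pderiv v P

/-- Evaluation of a jet polynomial on the jet of an actual map `f : ℂ → ℂⁿ` at `z`:
the variable `(k, λ)` is evaluated to the derivative `f_k^{(λ)}(z)`. -/
noncomputable def jetEval {n : ℕ} (f : Fin n → ℂ → ℂ) (z : ℂ)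
    (P : MvPolynomial (Fin n × ℕ) ℂ) : ℂ :=
  eval (fun v => iteratedDeriv v.2 (f v.1) z) P

/-- A jet polynomial `P` is invariant by reparametrization of weight `m` if
`P(jᵏ(f∘φ)) = (φ')^m · P((jᵏf)∘φ)` for all holomorphic maps `f` and
reparametrizations `φ`. -/
def IsInvariantWt {n : ℕ} (m : ℕ) (P : MvPolynomial (Fin n × ℕ) ℂ) : Prop :=
  ∀ f : Fin n → ℂ → ℂ, (∀ k, Differentiable ℂ (f k)) →
    ∀ φ : ℂ → ℂ, Differentiable ℂ φ →
      ∀ z : ℂ, jetEval (fun k => f k ∘ φ) z P = (deriv φ z) ^ m * jetEval f (φ z) P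

/-- The bracket `[P,Q] := n·(DP)·Q − m·P·(DQ)` of a weight-`m` jet polynomial `P` and a
weight-`n` jet polynomial `Q`. -/
noncomputable def jetBracket {n : ℕ} (m q : ℕ) (P Q : MvPolynomial (Fin n × ℕ) ℂ) :
    MvPolynomial (Fin n × ℕ) ℂ :=
  (q : MvPolynomial (Fin n × ℕ) ℂ) * Dop P * Q
    - (m : MvPolynomial (Fin n × ℕ) ℂ) * P * Dop Q

/-- A holomorphic function is smooth, so its iterated derivatives satisfy the
expected derivative recursion. -/
lemma hasDerivAt_iteratedDeriv {g : ℂ → ℂ} (hg : Differentiable ℂ g) (k : ℕ) (z : ℂ) :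
    HasDerivAt (iteratedDeriv k g) (iteratedDeriv (k + 1) g z) z := by
  have h : Differentiable ℂ (iteratedDeriv k g) := by
    rw [iteratedDeriv_eq_iterate]
    exact (hg.contDiff.iterate_deriv k).differentiable (by simp)
  rw [iteratedDeriv_succ]
  exact (h z).hasDerivAt

/-- The sum defining the evaluated total derivative can be taken over any finite superset
of the variables. -/
lemma evalD_superset {n : ℕ} (g g' : (Fin n × ℕ) → ℂ) (P : MvPolynomial (Fin n × ℕ) ℂ)
    {S : Finset (Fin n × ℕ)} (hS : P.vars ⊆ S) :
    ∑ v ∈ S, g' v * eval g (pderiv v P) = ∑ v ∈ P.vars, g' v * eval g (pderiv v P) := by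
  refine (Finset.sum_subset hS fun v _ hv => ?_).symm
  rw [pderiv_eq_zero_of_notMem_vars hv, map_zero, mul_zero]

/-- Chain rule for evaluation of a multivariate polynomial along a family of
differentiable curves. -/
lemma hasDerivAt_eval_aux {n : ℕ} (g : ℂ → (Fin n × ℕ) → ℂ) (g' : (Fin n × ℕ) → ℂ) (z : ℂ)
    (hg : ∀ v, HasDerivAt (fun w => g w v) (g' v) z)
    (P : MvPolynomial (Fin n × ℕ) ℂ) :
    HasDerivAt (fun w => eval (g w) P) (∑ v ∈ P.vars, g' v * eval (g z) (pderiv v P)) z := by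
  classical
  induction P using MvPolynomial.induction_on with
  | C a =>
      simp only [eval_C]
      have : ∑ v ∈ (C (σ := Fin n × ℕ) a).vars, g' v * eval (g z) (pderiv v (C a)) = 0 := by
        simp [pderiv_C]
      rw [this]
      exact hasDerivAt_const z a
  | add P Q hP hQ =>
      have h := hP.add hQ
      simp only [eval_add]
      refine h.congr_deriv ?_; symm
      rw [← evalD_superset (g z) g' P (S := P.vars ∪ Q.vars ∪ (P + Q).vars)
            (by intro v hv; simp [hv]),
          ← evalD_superset (g z) g' Q (S := P.vars ∪ Q.vars ∪ (P + Q).vars)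
            (by intro v hv; simp [hv]),
          ← evalD_superset (g z) g' (P + Q) (S := P.vars ∪ Q.vars ∪ (P + Q).vars)
            (by intro v hv; simp [hv]),
          ← Finset.sum_add_distrib]
      refine Finset.sum_congr rfl fun v _ => ?_
      rw [map_add, map_add]; ring
  | mul_X P u hP =>
      have h := hP.mul (hg u)
      simp only [eval_mul, eval_X]
      refine h.congr_deriv ?_; symm
      rw [← evalD_superset (g z) g' (P * X u) (S := (P * X u).vars ∪ P.vars ∪ {u})
            (by intro v hv; simp [hv])]
      have : ∀ v ∈ (P * X u).vars ∪ P.vars ∪ {u},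
          g' v * eval (g z) (pderiv v (P * X u)) =
            g' v * eval (g z) (pderiv v P) * g z u
              + (if v = u then eval (g z) P * g' u else 0) := by
        intro v _
        rw [pderiv_mul, map_add, map_mul, map_mul, eval_X]
        by_cases hvu : v = u
        · subst hvu; simp; ring
        · simp [pderiv_X_of_ne (Ne.symm hvu), hvu]; ring
      rw [Finset.sum_congr rfl this, Finset.sum_add_distrib, ← Finset.sum_mul,
          evalD_superset (g z) g' P (by intro v hv; simp [hv]), Finset.sum_ite_eq']
      simp

/-- `Dop` evaluated on a jet is the derivative of the evaluation of `P` on the jet. -/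
lemma hasDerivAt_jetEval {n : ℕ} (f : Fin n → ℂ → ℂ) (hf : ∀ k, Differentiable ℂ (f k))
    (P : MvPolynomial (Fin n × ℕ) ℂ) (z : ℂ) :
    HasDerivAt (fun w => jetEval f w P) (jetEval f z (Dop P)) z := by
  have h := hasDerivAt_eval_aux (fun w v => iteratedDeriv v.2 (f v.1) w)
      (fun v => iteratedDeriv (v.2 + 1) (f v.1) z) z
      (fun v => hasDerivAt_iteratedDeriv (hf v.1) v.2 z) P
  refine h.congr_deriv ?_; symm
  simp [jetEval, Dop, map_sum]

/-- Differentiating the invariance identity for a weight-`m` invariant polynomial. -/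
lemma jetEval_Dop_comp {n : ℕ} (f : Fin n → ℂ → ℂ) (hf : ∀ k, Differentiable ℂ (f k))
    (φ : ℂ → ℂ) (hφ : Differentiable ℂ φ) (z : ℂ) (m : ℕ) (P : MvPolynomial (Fin n × ℕ) ℂ)
    (hP : IsInvariantWt m P) :
    jetEval (fun k => f k ∘ φ) z (Dop P) =
      (m : ℂ) * (deriv φ z) ^ (m - 1) * deriv (deriv φ) z * jetEval f (φ z) P
        + (deriv φ z) ^ m * (jetEval f (φ z) (Dop P) * deriv φ z) := by
  have hcomp : ∀ k, Differentiable ℂ (f k ∘ φ) := fun k => (hf k).comp hφ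
  have h1 : HasDerivAt (fun w => jetEval (fun k => f k ∘ φ) w P)
      (jetEval (fun k => f k ∘ φ) z (Dop P)) z := hasDerivAt_jetEval _ hcomp P z
  have hφ' : HasDerivAt (deriv φ) (deriv (deriv φ) z) z := by
    have := hasDerivAt_iteratedDeriv hφ 1 z
    simpa [iteratedDeriv_one, iteratedDeriv_succ] using this
  have hpow : HasDerivAt (fun w => deriv φ w ^ m)
      ((m : ℂ) * deriv φ z ^ (m - 1) * deriv (deriv φ) z) z := hφ'.pow m
  have hG : HasDerivAt (fun w => jetEval f w P) (jetEval f (φ z) (Dop P)) (φ z) :=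
    hasDerivAt_jetEval f hf P (φ z)
  have hGc : HasDerivAt (fun w => jetEval f (φ w) P)
      (jetEval f (φ z) (Dop P) * deriv φ z) z :=
    HasDerivAt.comp z hG (hφ z).hasDerivAt
  have h2 : HasDerivAt (fun w => deriv φ w ^ m * jetEval f (φ w) P)
      ((m : ℂ) * (deriv φ z) ^ (m - 1) * deriv (deriv φ) z * jetEval f (φ z) P
        + (deriv φ z) ^ m * (jetEval f (φ z) (Dop P) * deriv φ z)) z := hpow.mul hGc
  have heq : (fun w => jetEval (fun k => f k ∘ φ) w P)
      = fun w => deriv φ w ^ m * jetEval f (φ w) P := funext fun w => by exact hP f hf φ hφ w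
  rw [heq] at h1
  exact h1.unique h2

/-- `jetEval` expands on the bracket. -/
lemma jetEval_jetBracket {n : ℕ} (m q : ℕ) (P Q : MvPolynomial (Fin n × ℕ) ℂ)
    (f : Fin n → ℂ → ℂ) (z : ℂ) :
    jetEval f z (jetBracket m q P Q) =
      (q : ℂ) * jetEval f z (Dop P) * jetEval f z Q
        - (m : ℂ) * jetEval f z P * jetEval f z (Dop Q) := by
  simp [jetBracket, jetEval]

/-- If `P` and `Q` are jet polynomials invariant by reparametrization of weights `m` and
`n` respectively, then the bracket `[P,Q] = n·DP·Q − m·P·DQ` is invariant by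
reparametrization of weight `m + n + 1`. -/
theorem jetBracket_isInvariant {n : ℕ} (m q : ℕ) (P Q : MvPolynomial (Fin n × ℕ) ℂ)
    (hP : IsInvariantWt m P) (hQ : IsInvariantWt q Q) :
    IsInvariantWt (m + q + 1) (jetBracket m q P Q) := by
  intro f hf φ hφ z
  set a := deriv φ z with ha
  set b := deriv (deriv φ) z with hb
  set p := jetEval f (φ z) P with hp
  set qq := jetEval f (φ z) Q with hqq
  set dp := jetEval f (φ z) (Dop P) with hdp
  set dq := jetEval f (φ z) (Dop Q) with hdq
  rw [jetEval_jetBracket, jetEval_jetBracket,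
    jetEval_Dop_comp f hf φ hφ z m P hP, jetEval_Dop_comp f hf φ hφ z q Q hQ,
    hP f hf φ hφ z, hQ f hf φ hφ z]
  rcases m with _ | m <;> rcases q with _ | q <;>
    simp only [Nat.cast_zero, Nat.cast_succ, Nat.succ_sub_one, pow_zero, Nat.zero_sub,
      zero_mul, zero_add, add_zero, Nat.cast_add, Nat.cast_one] <;> ring
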